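/- If polynomials p_n satisfy p_{n+1}(z) = ∫_0^z Q(x,z) p_n(x) dx for a fixed bivariate polynomial Q of degree d in z, with p_0 = 1, then the generating function G(t,z) = ∑_{n≥0} p_n(z) t^n satisfies a linear differential equation in z with coefficients polynomial in z and t, i.e., G is D-finite in z. -/

import Mathlib

open Polynomial

/-- Formal antiderivative with constant term 0. -/
noncomputable def Jint (g : ℝ[X]) : ℝ[X] :=
  g.sum fun i a => C (a / (i+1)) * X^(i+1)

lemma Jint_deriv (g : ℝ[X]) : derivative (Jint g) = g := by
  unfold Jint
  rw [Polynomial.sum_def, map_sum]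
  have : ∀ i ∈ g.support, derivative (C (g.coeff i / (↑i+1)) * X^(i+1))
      = C (g.coeff i) * X ^ i := by
    intro i _
    rw [derivative_C_mul_X_pow]
    push_cast
    rw [div_mul_cancel₀ _ (by positivity : ((i:ℝ)+1) ≠ 0)]
  rw [Finset.sum_congr rfl this]
  conv_rhs => rw [← Polynomial.sum_C_mul_X_pow_eq g]
  rw [Polynomial.sum_def]

lemma Jint_eval_zero (g : ℝ[X]) : (Jint g).eval 0 = 0 := by
  unfold Jint
  rw [Polynomial.sum_def, Polynomial.eval_finset_sum]
  exact Finset.sum_eq_zero fun i _ => by simp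

lemma Jint_integral (g : ℝ[X]) (z : ℝ) :
    ∫ x in (0:ℝ)..z, g.eval x = (Jint g).eval z := by
  have h := intervalIntegral.integral_deriv_eq_sub' (a := 0) (b := z)
    (fun x => (Jint g).eval x) (f' := fun x => g.eval x)
    (funext fun x => by rw [Polynomial.deriv, Jint_deriv])
    (fun x _ => (Jint g).differentiableAt)
    (g.continuous_aeval.continuousOn)
  rw [h, Jint_eval_zero, sub_zero]

lemma iter_deriv_add (p q : ℝ[X]) (n : ℕ) :
    derivative^[n] (p+q) = derivative^[n] p + derivative^[n] q := by
  induction n with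
  | zero => rfl
  | succ n ih => simp [Function.iterate_succ_apply', ih]

lemma iter_deriv_sum {ι : Type*} (s : Finset ι) (f : ι → ℝ[X]) (n : ℕ) :
    derivative^[n] (∑ i ∈ s, f i) = ∑ i ∈ s, derivative^[n] (f i) := by
  induction n with
  | zero => rfl
  | succ n ih => simp [Function.iterate_succ_apply', ih]

lemma lemA (a : ℝ[X]) : ∀ (s : ℕ) (u : ℝ[X]), derivative^[s+1] u = 0 →
    ∃ c : ℕ → ℝ[X], (∀ m, s < m → c m = 0) ∧ ∀ f : ℝ[X],
      derivative^[s+1] (u * Jint (a * f)) = ∑ m ∈ Finset.range (s+1), c m * derivative^[m] f := by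
  intro s
  induction s with
  | zero =>
    intro u hu
    simp only [zero_add, Function.iterate_one] at hu
    refine ⟨fun m => if m = 0 then u * a else 0,
      fun m hm => by simp [Nat.pos_iff_ne_zero.mp hm], fun f => ?_⟩
    simp only [zero_add, Function.iterate_one, Finset.range_one, Finset.sum_singleton,
      if_pos rfl, Function.iterate_zero, id_eq]
    rw [derivative_mul, hu, Jint_deriv, zero_mul, zero_add]
    rw [if_pos trivial, mul_assoc]
  | succ s ih =>
    intro u hu
    have hu' : derivative^[s+1] (derivative u) = 0 := by
      rw [← Function.iterate_succ_apply]; exact hu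
    obtain ⟨c₁, hc₁0, hc₁⟩ := ih (derivative u) hu'
    refine ⟨fun m => c₁ m + (s+1).choose m • derivative^[s+1-m] (u * a),
      fun m hm => ?_, fun f => ?_⟩
    · show c₁ m + (s+1).choose m • derivative^[s+1-m] (u*a) = 0
      rw [hc₁0 m (by omega), Nat.choose_eq_zero_of_lt (by omega), zero_add, zero_smul]
    · have step : derivative^[s+1+1] (u * Jint (a * f))
          = derivative^[s+1] (derivative u * Jint (a * f)) + derivative^[s+1] (u * (a * f)) := by
        rw [Function.iterate_succ_apply, derivative_mul, Jint_deriv, iter_deriv_add]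
      rw [step, hc₁ f, ← mul_assoc, Polynomial.iterate_derivative_mul]
      have expand : ∑ m ∈ Finset.range (s+1+1),
            (fun m => c₁ m + (s+1).choose m • derivative^[s+1-m] (u*a)) m * derivative^[m] f
          = (∑ m ∈ Finset.range (s+1+1), c₁ m * derivative^[m] f)
            + ∑ m ∈ Finset.range (s+1+1),
                (s+1).choose m • (derivative^[s+1-m] (u*a) * derivative^[m] f) := by
        rw [← Finset.sum_add_distrib]
        refine Finset.sum_congr rfl fun m _ => ?_
        show (c₁ m + (s+1).choose m • derivative^[s+1-m] (u*a)) * derivative^[m] f = _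
        rw [add_mul, smul_mul_assoc]
      rw [expand, Finset.sum_range_succ (fun m => c₁ m * derivative^[m] f) (s+1),
        hc₁0 (s+1) (by omega), zero_mul, add_zero]

noncomputable def toBiv (Q : MvPolynomial (Fin 2) ℝ) : Polynomial (Polynomial ℝ) :=
  MvPolynomial.eval₂ ((Polynomial.C).comp (Polynomial.C))
    (fun i => if i = 0 then Polynomial.C Polynomial.X else Polynomial.X) Q

lemma toBiv_eval (Q : MvPolynomial (Fin 2) ℝ) (x z : ℝ) :
    MvPolynomial.eval ![x, z] Q
      = ((toBiv Q).map (Polynomial.evalRingHom x)).eval z := by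
  have key := MvPolynomial.eval₂_comp_left
    ((Polynomial.evalRingHom z).comp (Polynomial.mapRingHom (Polynomial.evalRingHom x)))
    ((Polynomial.C).comp (Polynomial.C))
    (fun i : Fin 2 => if i = 0 then Polynomial.C Polynomial.X else Polynomial.X) Q
  have lhs_eq : ((toBiv Q).map (Polynomial.evalRingHom x)).eval z
      = ((Polynomial.evalRingHom z).comp (Polynomial.mapRingHom (Polynomial.evalRingHom x)))
          (toBiv Q) := rfl
  rw [lhs_eq]
  unfold toBiv
  rw [key, MvPolynomial.eval]
  show MvPolynomial.eval₂Hom (RingHom.id ℝ) ![x,z] Q = _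
  rw [show (MvPolynomial.eval₂Hom (RingHom.id ℝ) ![x,z]) Q
      = MvPolynomial.eval₂ (RingHom.id ℝ) ![x,z] Q from rfl]
  congr 1
  · ext a
    simp
  · funext i
    fin_cases i <;> simp

lemma Dpow (h : ℕ → ℝ[X]) (j : ℕ) :
    (fun (G : PowerSeries (Polynomial ℝ)) =>
        PowerSeries.mk fun i => Polynomial.derivative (PowerSeries.coeff i G))^[j]
      (PowerSeries.mk h) = PowerSeries.mk fun i => derivative^[j] (h i) := by
  induction j generalizing h with
  | zero => rfl
  | succ j ih =>
    rw [Function.iterate_succ_apply]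
    have h1 : (PowerSeries.mk fun i =>
        Polynomial.derivative (PowerSeries.coeff i (PowerSeries.mk h)))
        = PowerSeries.mk fun i => Polynomial.derivative (h i) := by
      refine PowerSeries.ext fun n => ?_
      simp only [PowerSeries.coeff_mk]
    rw [h1, ih]
    exact congrArg _ (funext fun i => (Function.iterate_succ_apply _ j (h i)).symm)

theorem stmt16 (Q : MvPolynomial (Fin 2) ℝ) (d : ℕ)
    (hd : MvPolynomial.degreeOf 1 Q = d)
    (p : ℕ → Polynomial ℝ) (hp0 : p 0 = 1)
    (hrec : ∀ (n : ℕ) (z : ℝ), (p (n+1)).eval z =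
      ∫ x in (0:ℝ)..z, (MvPolynomial.eval ![x, z] Q) * (p n).eval x) :
    ∃ (r : ℕ) (a : ℕ → Polynomial (Polynomial ℝ)),
      (∃ j ≤ r, a j ≠ 0) ∧
      ∑ j ∈ Finset.range (r+1),
        (PowerSeries.mk fun i => (a j).coeff i) *
          (fun (G : PowerSeries (Polynomial ℝ)) =>
            PowerSeries.mk fun i => Polynomial.derivative (PowerSeries.coeff i G))^[j]
          (PowerSeries.mk fun i => p i) = 0 := by
  classical
  set P : Polynomial (Polynomial ℝ) := toBiv Q with hPdef
  set N : ℕ := P.natDegree with hNdef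
  -- Step 1: polynomial form of the recurrence
  have hstep : ∀ n, p (n+1) = ∑ k ∈ Finset.range (N+1), X^k * Jint (P.coeff k * p n) := by
    intro n
    apply Polynomial.funext
    intro z
    rw [hrec n z]
    have hint : ∀ x : ℝ, (MvPolynomial.eval ![x, z] Q) * (p n).eval x
        = ∑ k ∈ Finset.range (N+1), z^k * (P.coeff k * p n).eval x := by
      intro x
      rw [toBiv_eval Q x z,
        Polynomial.eval_eq_sum_range' (lt_of_le_of_lt
          Polynomial.natDegree_map_le (Nat.lt_succ_self N)) z]
      rw [Finset.sum_mul]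
      refine Finset.sum_congr rfl fun k _ => ?_
      rw [Polynomial.coeff_map, Polynomial.eval_mul]
      show ((P.coeff k).eval x) * z^k * (p n).eval x = z^k * ((P.coeff k).eval x * (p n).eval x)
      ring
    rw [intervalIntegral.integral_congr (fun x _ => hint x)]
    rw [intervalIntegral.integral_finset_sum
      (f := fun k (x:ℝ) => z^k * (P.coeff k * p n).eval x) (fun k _ =>
      (Continuous.intervalIntegrable (continuous_const.mul ((P.coeff k * p n).continuous)) 0 z))]
    rw [Polynomial.eval_finset_sum]
    refine Finset.sum_congr rfl fun k _ => ?_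
    rw [intervalIntegral.integral_const_mul, Jint_integral, Polynomial.eval_mul,
      Polynomial.eval_pow, Polynomial.eval_X]
  -- Step 2: eliminate the integrals by differentiating N+1 times
  have hXk : ∀ k ∈ Finset.range (N+1), derivative^[N+1] ((X : ℝ[X])^k) = 0 := by
    intro k hk
    refine Polynomial.iterate_derivative_eq_zero ?_
    calc (X^k : ℝ[X]).natDegree ≤ k := natDegree_X_pow_le k
    _ < N+1 := Finset.mem_range.mp hk
  choose cs hcs0 hcs using fun k (hk : k ∈ Finset.range (N+1)) =>
    lemA (P.coeff k) N (X^k) (hXk k hk)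
  set c : ℕ → ℝ[X] := fun m => ∑ k ∈ (Finset.range (N+1)).attach, cs k.1 k.2 m with hcdef
  have key : ∀ n, derivative^[N+1] (p (n+1)) = ∑ m ∈ Finset.range (N+1), c m * derivative^[m] (p n) := by
    intro n
    rw [hstep n, iter_deriv_sum]
    rw [← Finset.sum_attach (Finset.range (N+1)) (fun k => derivative^[N+1] (X^k * Jint (P.coeff k * p n)))]
    rw [Finset.sum_congr rfl (fun k _ => hcs k.1 k.2 (p n))]
    rw [Finset.sum_comm]
    refine Finset.sum_congr rfl fun m _ => ?_
    rw [hcdef]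
    rw [Finset.sum_mul]
  -- Step 3: assemble the ODE
  set A : ℕ → Polynomial (Polynomial ℝ) :=
    fun j => if j = N+1 then 1 else -(Polynomial.X * Polynomial.C (c j)) with hA
  refine ⟨N+1, A, ⟨N+1, le_refl _, by simp [hA]⟩, ?_⟩
  rw [Finset.sum_congr rfl (fun j _ => by rw [Dpow])]
  rw [Finset.sum_range_succ]
  have hlast : (PowerSeries.mk fun i => (A (N+1)).coeff i) = (1 : PowerSeries (Polynomial ℝ)) := by
    rw [hA]
    simp only [if_pos rfl]
    refine PowerSeries.ext fun m => ?_
    rw [PowerSeries.coeff_mk]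
    simp [PowerSeries.coeff_one, Polynomial.coeff_one]
  rw [hlast, one_mul]
  have hterm : ∀ j ∈ Finset.range (N+1),
      (PowerSeries.mk fun i => (A j).coeff i)
        * (PowerSeries.mk fun i => derivative^[j] (p i))
      = -(PowerSeries.C (c j)
          * (PowerSeries.X * PowerSeries.mk fun i => derivative^[j] (p i))) := by
    intro j hj
    have hj' : j ≠ N+1 := by have := Finset.mem_range.mp hj; omega
    have h2 : (PowerSeries.mk fun i => (A j).coeff i)
        = -(PowerSeries.C (c j) * PowerSeries.X) := by
      rw [hA]
      simp only [if_neg hj']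
      refine PowerSeries.ext fun m => ?_
      rw [PowerSeries.coeff_mk]
      simp only [Polynomial.coeff_neg, map_neg, neg_inj, mul_comm Polynomial.X,
        Polynomial.coeff_C_mul, PowerSeries.coeff_C_mul, Polynomial.coeff_X, PowerSeries.coeff_X]
      rcases eq_or_ne m 1 with hm | hm <;> simp [hm, eq_comm]
    rw [h2, neg_mul, mul_assoc]
  rw [Finset.sum_congr rfl hterm]
  refine PowerSeries.ext fun n => ?_
  rw [map_add, map_sum, map_zero]
  cases n with
  | zero =>
    have h2 : (PowerSeries.coeff 0)
        (PowerSeries.mk fun i => derivative^[N+1] (p i)) = 0 := by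
      rw [PowerSeries.coeff_mk, hp0]
      exact Polynomial.iterate_derivative_one (Nat.succ_pos N)
    rw [h2, add_zero]
    refine Finset.sum_eq_zero fun j _ => ?_
    rw [map_neg, PowerSeries.coeff_C_mul, mul_comm PowerSeries.X,
      PowerSeries.coeff_zero_mul_X, mul_zero, neg_zero]
  | succ n =>
    have h3 : ∀ j ∈ Finset.range (N+1),
        (PowerSeries.coeff (n+1))
          (-(PowerSeries.C (c j)
            * (PowerSeries.X * PowerSeries.mk fun i => derivative^[j] (p i))))
        = -(c j * derivative^[j] (p n)) := by
      intro j _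
      rw [map_neg, PowerSeries.coeff_C_mul, PowerSeries.coeff_succ_X_mul, PowerSeries.coeff_mk]
    rw [Finset.sum_congr rfl h3, PowerSeries.coeff_mk, key n, ← Finset.sum_add_distrib]
    exact Finset.sum_eq_zero fun j _ => neg_add_cancel _
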